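/- Let A₀ = diag(1, 1, −2) ∈ gl(3,ℂ), and consider the action of U(1) × SO(3) on the space of complex symmetric traceless 3×3 matrices given by (e^{iφ}, R) · A = e^{iφ} R A R⁻¹. Then the stabilizer of A₀ equals the one-dimensional subgroup {(1, ρ(α)) : α ∈ ℝ} ∪ {(1, ρ(α) J₋) : α ∈ ℝ}, where J₋ = diag(1, −1, −1). -/

import Mathlib

open Matrix

noncomputable section

abbrev M3R : Type := Matrix (Fin 3) (Fin 3) ℝ
abbrev M3C : Type := Matrix (Fin 3) (Fin 3) ℂ

def isSO3 (R : M3R) : Prop := R * Rᵀ = 1 ∧ R.det = 1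

def toC (R : M3R) : M3C := R.map (fun x => (x : ℂ))

/-- `ρ(θ) = exp(θ ê₃)`, the rotation by angle `θ` about the third axis. -/
def rot3 (θ : ℝ) : M3R :=
  !![Real.cos θ, -Real.sin θ, 0; Real.sin θ, Real.cos θ, 0; 0, 0, 1]

/-- `J₋ = diag(1,-1,-1)`. -/
def Jm : M3R := !![1, 0, 0; 0, -1, 0; 0, 0, -1]

/-- `A₀ = diag(1, 1, -2)`. -/
def A0 : M3C := !![1, 0, 0; 0, 1, 0; 0, 0, -2]

lemma toC_mul (M N : M3R) : toC (M * N) = toC M * toC N := by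
  ext i j; simp [toC, Matrix.mul_apply]

lemma toC_transpose (M : M3R) : toC Mᵀ = (toC M)ᵀ := by
  ext i j; simp [toC]

lemma toC_one : toC 1 = 1 := by
  ext i j; simp [toC, Matrix.one_apply, apply_ite]

lemma cossin (a b : ℝ) (h : a ^ 2 + b ^ 2 = 1) : ∃ θ, Real.cos θ = a ∧ Real.sin θ = b := by
  have hz : ‖(⟨a, b⟩ : ℂ)‖ = 1 := by
    simp only [Complex.norm_def, Complex.normSq_mk]
    rw [show a * a + b * b = 1 by nlinarith]; simp
  have hne : (⟨a, b⟩ : ℂ) ≠ 0 := by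
    intro h0; rw [h0] at hz; simp at hz
  refine ⟨Complex.arg ⟨a, b⟩, ?_, ?_⟩
  · rw [Complex.cos_arg hne, hz]; simp
  · rw [Complex.sin_arg, hz]; simp

lemma rot3_so (θ : ℝ) : isSO3 (rot3 θ) := by
  constructor
  · ext i j
    simp only [Matrix.mul_apply, Matrix.transpose_apply, Fin.sum_univ_three]
    fin_cases i <;> fin_cases j <;>
      norm_num [rot3, Matrix.one_apply, Matrix.vecHead, Matrix.vecTail, Fin.ext_iff, Matrix.cons_val_two, Matrix.tail_cons, Matrix.head_cons] <;>
      nlinarith [Real.sin_sq_add_cos_sq θ]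
  · rw [Matrix.det_fin_three]; norm_num [rot3, Matrix.cons_val_two, Matrix.tail_cons, Matrix.head_cons]; nlinarith [Real.sin_sq_add_cos_sq θ]

lemma rotJm_so (θ : ℝ) : isSO3 (rot3 θ * Jm) := by
  constructor
  · ext i j
    simp only [Matrix.mul_apply, Matrix.transpose_apply, Fin.sum_univ_three]
    fin_cases i <;> fin_cases j <;>
      norm_num [rot3, Jm, Matrix.mul_apply, Fin.sum_univ_three, Matrix.one_apply,
        Matrix.vecHead, Matrix.vecTail, Fin.ext_iff, Matrix.cons_val_two, Matrix.tail_cons, Matrix.head_cons] <;>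
      nlinarith [Real.sin_sq_add_cos_sq θ]
  · rw [Matrix.det_fin_three]
    norm_num [rot3, Jm, Matrix.mul_apply, Fin.sum_univ_three, Matrix.cons_val_two, Matrix.tail_cons, Matrix.head_cons]
    nlinarith [Real.sin_sq_add_cos_sq θ]

lemma rot3_comm (θ : ℝ) : toC (rot3 θ) * A0 = A0 * toC (rot3 θ) := by
  ext i j
  simp only [Matrix.mul_apply, Fin.sum_univ_three]
  fin_cases i <;> fin_cases j <;>
    norm_num [toC, rot3, A0, Matrix.vecHead, Matrix.vecTail, Matrix.cons_val_two, Matrix.tail_cons, Matrix.head_cons]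

lemma rotJm_comm (θ : ℝ) : toC (rot3 θ * Jm) * A0 = A0 * toC (rot3 θ * Jm) := by
  ext i j
  simp only [Matrix.mul_apply, Fin.sum_univ_three]
  fin_cases i <;> fin_cases j <;>
    norm_num [toC, rot3, Jm, A0, Matrix.mul_apply, Fin.sum_univ_three,
      Matrix.vecHead, Matrix.vecTail, Matrix.cons_val_two, Matrix.tail_cons, Matrix.head_cons]

lemma stab_of (R : M3R) (h1 : R * Rᵀ = 1) (hc : toC R * A0 = A0 * toC R) :
    toC R * A0 * (toC R)⁻¹ = A0 := by
  have hCCt : toC R * (toC R)ᵀ = 1 := by rw [← toC_transpose, ← toC_mul, h1, toC_one]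
  have hinv : (toC R)⁻¹ = (toC R)ᵀ := Matrix.inv_eq_right_inv hCCt
  rw [hinv, hc, Matrix.mul_assoc, hCCt, Matrix.mul_one]

/-- The stabilizer of `A₀ = diag(1,1,-2)` in `U(1) × SO(3)` under the action
`(e^{iφ}, R) · A = e^{iφ} R A R⁻¹` equals `{(1, ρ(α))} ∪ {(1, ρ(α) J₋)}`. -/
theorem stabilizer_Omega1_phase :
    {g : ℂ × M3R |
        (‖g.1‖ = 1 ∧ isSO3 g.2) ∧ g.1 • (toC g.2 * A0 * (toC g.2)⁻¹) = A0} =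
    {g : ℂ × M3R | ∃ α : ℝ, g = (1, rot3 α) ∨ g = (1, rot3 α * Jm)} := by
  ext ⟨z, R⟩
  simp only [Set.mem_setOf_eq]
  constructor
  · rintro ⟨⟨hn, hRt, hdet⟩, hact⟩
    set C := toC R with hCdef
    have hCCt : C * Cᵀ = 1 := by rw [← toC_transpose, ← toC_mul, hRt, toC_one]
    have hCtC : Cᵀ * C = 1 := mul_eq_one_comm.mp hCCt
    have hCinv : C⁻¹ = Cᵀ := Matrix.inv_eq_right_inv hCCt
    rw [hCinv] at hact
    -- determinant: z^3 = 1
    have hdetC : C.det * Cᵀ.det = 1 := by rw [← Matrix.det_mul, hCCt, Matrix.det_one]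
    have hdA0 : A0.det = -2 := by
      rw [Matrix.det_fin_three]; norm_num [A0, Matrix.vecHead, Matrix.vecTail, Matrix.cons_val_two, Matrix.tail_cons, Matrix.head_cons]
    have h3 : z ^ 3 = 1 := by
      have hd := congrArg Matrix.det hact
      rw [Matrix.det_smul, Matrix.det_mul, Matrix.det_mul, hdA0] at hd
      simp only [Fintype.card_fin] at hd
      have h1 : z ^ 3 * (C.det * -2 * Cᵀ.det) = -2 := hd
      have h2' : C.det * -2 * Cᵀ.det = -2 := by linear_combination (-2 : ℂ) * hdetC
      rw [h2'] at h1
      linear_combination (-1/2 : ℂ) * h1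
    -- trace of the square: z^2 = 1
    have h2 : z ^ 2 = 1 := by
      have hsq : (z • (C * A0 * Cᵀ)) * (z • (C * A0 * Cᵀ)) = A0 * A0 := by rw [hact]
      rw [smul_mul_assoc, mul_smul_comm, smul_smul] at hsq
      have hmid : C * A0 * Cᵀ * (C * A0 * Cᵀ) = C * (A0 * A0) * Cᵀ := by
        calc C * A0 * Cᵀ * (C * A0 * Cᵀ) = C * (A0 * ((Cᵀ * C) * (A0 * Cᵀ))) := by
              simp only [Matrix.mul_assoc]
          _ = C * (A0 * A0) * Cᵀ := by rw [hCtC, Matrix.one_mul]; simp only [Matrix.mul_assoc]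
      rw [hmid] at hsq
      have ht := congrArg Matrix.trace hsq
      rw [Matrix.trace_smul, Matrix.trace_mul_comm (C * (A0 * A0)) Cᵀ, ← Matrix.mul_assoc,
        hCtC, Matrix.one_mul] at ht
      have htr6 : (A0 * A0).trace = 6 := by
        simp [A0, Matrix.trace_fin_three, Matrix.mul_apply, Fin.sum_univ_three,
          Matrix.vecHead, Matrix.vecTail]
        norm_num
      rw [htr6] at ht
      have h6 : (z * z) * 6 = 6 := by simpa using ht
      linear_combination (1/6 : ℂ) * h6
    have z1 : z = 1 := by linear_combination h3 - z * h2
    rw [z1, one_smul] at hact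
    have hcomm : C * A0 = A0 * C := by
      calc C * A0 = C * A0 * (Cᵀ * C) := by rw [hCtC, Matrix.mul_one]
        _ = (C * A0 * Cᵀ) * C := by simp only [Matrix.mul_assoc]
        _ = A0 * C := by rw [hact]
    have E : ∀ i j, (C * A0) i j = (A0 * C) i j := fun i j => by rw [hcomm]
    have h02 : R 0 2 = 0 := by
      have h := E 0 2
      simp [hCdef, toC, A0, Matrix.mul_apply, Fin.sum_univ_three, Matrix.vecHead,
        Matrix.vecTail] at h
      exact_mod_cast show ((R 0 2 : ℝ) : ℂ) = 0 by linear_combination (-1/3 : ℂ) * h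
    have h12 : R 1 2 = 0 := by
      have h := E 1 2
      simp [hCdef, toC, A0, Matrix.mul_apply, Fin.sum_univ_three, Matrix.vecHead,
        Matrix.vecTail] at h
      exact_mod_cast show ((R 1 2 : ℝ) : ℂ) = 0 by linear_combination (-1/3 : ℂ) * h
    have h20 : R 2 0 = 0 := by
      have h := E 2 0
      simp [hCdef, toC, A0, Matrix.mul_apply, Fin.sum_univ_three, Matrix.vecHead,
        Matrix.vecTail] at h
      exact_mod_cast show ((R 2 0 : ℝ) : ℂ) = 0 by linear_combination (1/3 : ℂ) * h
    have h21 : R 2 1 = 0 := by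
      have h := E 2 1
      simp [hCdef, toC, A0, Matrix.mul_apply, Fin.sum_univ_three, Matrix.vecHead,
        Matrix.vecTail] at h
      exact_mod_cast show ((R 2 1 : ℝ) : ℂ) = 0 by linear_combination (1/3 : ℂ) * h
    -- orthogonality relations
    have O : ∀ i j, (R * Rᵀ) i j = (1 : M3R) i j := fun i j => by rw [hRt]
    have o00 := O 0 0
    have o01 := O 0 1
    have o11 := O 1 1
    have o22 := O 2 2
    simp [Matrix.mul_apply, Matrix.transpose_apply, Fin.sum_univ_three, Matrix.one_apply,
      h02, h12, h20, h21] at o00 o01 o11 o22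
    have hd := hdet
    rw [Matrix.det_fin_three] at hd
    rw [h02, h12, h20, h21] at hd
    rcases mul_self_eq_one_iff.mp o22 with he | he
    · -- R 2 2 = 1 : rotation
      have hdd : R 0 0 * R 1 1 - R 0 1 * R 1 0 = 1 := by rw [he] at hd; linear_combination hd
      obtain ⟨θ, hc, hs⟩ := cossin (R 0 0) (-(R 0 1)) (by nlinarith [o00])
      have hc10 : R 1 0 = -(R 0 1) := by
        linear_combination R 0 0 * o01 - R 0 1 * hdd - R 1 0 * o00
      have hd11 : R 1 1 = R 0 0 := by
        linear_combination R 0 1 * o01 + R 0 0 * hdd - R 1 1 * o00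
      have hR : R = rot3 θ := by
        ext i j
        fin_cases i <;> fin_cases j <;>
          simp [rot3, Matrix.vecHead, Matrix.vecTail, h02, h12, h20, h21, he, hc, hs, hc10, hd11]
      exact ⟨θ, Or.inl (by rw [z1, hR])⟩
    · -- R 2 2 = -1 : rotation times Jm
      have hdd : R 0 0 * R 1 1 - R 0 1 * R 1 0 = -1 := by rw [he] at hd; linear_combination -hd
      obtain ⟨θ, hc, hs⟩ := cossin (R 0 0) (R 0 1) (by nlinarith [o00])
      have hc10 : R 1 0 = R 0 1 := by
        linear_combination R 0 0 * o01 - R 0 1 * hdd - R 1 0 * o00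
      have hd11 : R 1 1 = -(R 0 0) := by
        linear_combination R 0 1 * o01 + R 0 0 * hdd - R 1 1 * o00
      have hR : R = rot3 θ * Jm := by
        ext i j
        fin_cases i <;> fin_cases j <;>
          simp [rot3, Jm, Matrix.mul_apply, Fin.sum_univ_three, Matrix.vecHead, Matrix.vecTail,
            h02, h12, h20, h21, he, hc, hs, hc10, hd11]
      exact ⟨θ, Or.inr (by rw [z1, hR])⟩
  · rintro ⟨α, h | h⟩ <;> rw [Prod.ext_iff] at h <;> obtain ⟨hz, hR⟩ := h <;>
      simp only at hz hR <;> subst hz <;> subst hR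
    · exact ⟨⟨norm_one, rot3_so α⟩, by rw [one_smul, stab_of _ (rot3_so α).1 (rot3_comm α)]⟩
    · exact ⟨⟨norm_one, rotJm_so α⟩, by rw [one_smul, stab_of _ (rotJm_so α).1 (rotJm_comm α)]⟩
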